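/- (Completeness of Armstrong's Axioms) Let T be a finite set of dependence atoms over a finite set of variables, and let =(y⃗,x⃗) be a dependence atom. Then =(y⃗,x⃗) is derivable from T using Armstrong's axioms (reflexivity, augmentation, permutation/union, and transitivity) if and only if every team that satisfies all atoms in T also satisfies =(y⃗,x⃗). -/

import Mathlib

/-- `agrees s s' w`: assignments `s` and `s'` agree on all variables in `w`. -/
def agrees {V M : Type*} (s s' : V → M) (w : Set V) : Prop := ∀ v ∈ w, s v = s' v

/-- The team `X` satisfies the functional dependence atom `=(y,x)`. -/
def depAtom {V M : Type*} (X : Set (V → M)) (y x : Set V) : Prop :=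
  ∀ s ∈ X, ∀ s' ∈ X, agrees s s' y → agrees s s' x

/-- The team `X` satisfies the conditional independence atom `y ⊥_x z`. -/
def condIndep {V M : Type*} (X : Set (V → M)) (y x z : Set V) : Prop :=
  ∀ s ∈ X, ∀ s' ∈ X, agrees s s' x →
    ∃ s'' ∈ X, agrees s'' s x ∧ agrees s'' s y ∧ agrees s'' s' z

/-- The team `X` satisfies the independence atom `a ⊥ b` (single variables). -/
def indepAtom {V M : Type*} (X : Set (V → M)) (a b : V) : Prop :=
  ∀ s ∈ X, ∀ s' ∈ X, ∃ s'' ∈ X, s'' b = s b ∧ s'' a = s' a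

/-- Derivability of dependence atoms from a set `T` of atoms by Armstrong's axioms:
reflexivity, augmentation, union (permutation is automatic for set-based atoms),
and transitivity. -/
inductive ArmDeriv {V : Type*} [DecidableEq V] (T : Finset (Finset V × Finset V)) :
    Finset V → Finset V → Prop
  | mem (y x : Finset V) (h : (y, x) ∈ T) : ArmDeriv T y x
  | refl (x : Finset V) : ArmDeriv T x x
  | aug (y z x : Finset V) (hyz : y ⊆ z) (h : ArmDeriv T y x) : ArmDeriv T z x
  | union (y x₁ x₂ : Finset V) (h₁ : ArmDeriv T y x₁) (h₂ : ArmDeriv T y x₂) :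
      ArmDeriv T y (x₁ ∪ x₂)
  | trans (y z x : Finset V) (h₁ : ArmDeriv T y z) (h₂ : ArmDeriv T z x) : ArmDeriv T y x


/-- Weakening on the right: from `y ⊢ x` and `c ⊆ x`, derive `y ⊢ c`. -/
theorem ArmDeriv.subset_right {V : Type*} [DecidableEq V]
    {T : Finset (Finset V × Finset V)} {y x c : Finset V}
    (h : ArmDeriv T y x) (hc : c ⊆ x) : ArmDeriv T y c :=
  .trans y x c h (.aug c x c hc (.refl c))

/-- If every singleton of `x` is derivable from `y`, then so is `x`. -/
theorem ArmDeriv.of_singletons {V : Type*} [DecidableEq V]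
    {T : Finset (Finset V × Finset V)} {y : Finset V} (x : Finset V)
    (h : ∀ v ∈ x, ArmDeriv T y {v}) : ArmDeriv T y x := by
  induction x using Finset.induction_on with
  | empty => exact .aug ∅ y ∅ (Finset.empty_subset y) (.refl ∅)
  | @insert a s ha ih =>
      have : ({a} ∪ s : Finset V) = insert a s := by
        rw [Finset.insert_eq]
      rw [← this]
      exact .union y {a} s (h a (Finset.mem_insert_self a s))
        (ih fun v hv => h v (Finset.mem_insert_of_mem hv))

theorem stmt5 {V : Type*} [Fintype V] [DecidableEq V]
    (T : Finset (Finset V × Finset V)) (y x : Finset V) :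
    ArmDeriv T y x ↔
      ∀ (M : Type) (X : Set (V → M)),
        (∀ a ∈ T, depAtom X (↑a.1) (↑a.2)) → depAtom X (↑y) (↑x) := by
  classical
  constructor
  · intro h M X hT
    induction h with
    | mem y x h => exact hT _ h
    | refl x => intro s hs s' hs' hag; exact hag
    | aug y z x hyz h ih =>
        intro s hs s' hs' hag
        exact ih s hs s' hs' fun v hv => hag v (hyz hv)
    | union y x₁ x₂ h₁ h₂ ih₁ ih₂ =>
        intro s hs s' hs' hag v hv
        rcases Finset.mem_union.mp (Finset.mem_coe.mp hv) with h | h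
        · exact ih₁ s hs s' hs' hag v h
        · exact ih₂ s hs s' hs' hag v h
    | trans y z x h₁ h₂ ih₁ ih₂ =>
        intro s hs s' hs' hag
        exact ih₂ s hs s' hs' (ih₁ s hs s' hs' hag)
  · intro hsem
    set cl : Finset V := Finset.univ.filter (fun v => ArmDeriv T y {v}) with hcl
    have hmemcl : ∀ v, v ∈ cl ↔ ArmDeriv T y {v} := by
      intro v; simp [hcl]
    have hycl : y ⊆ cl := fun v hv =>
      (hmemcl v).mpr (.aug {v} y {v} (Finset.singleton_subset_iff.mpr hv) (.refl {v}))
    have hclosed : ∀ a ∈ T, a.1 ⊆ cl → a.2 ⊆ cl := by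
      intro a ha h1 v hv
      have h1' : ArmDeriv T y a.1 :=
        ArmDeriv.of_singletons a.1 fun w hw => (hmemcl w).mp (h1 hw)
      exact (hmemcl v).mpr
        ((ArmDeriv.trans y a.1 a.2 h1' (.mem a.1 a.2 ha)).subset_right
          (Finset.singleton_subset_iff.mpr hv))
    set s₁ : V → Bool := fun _ => true with hs1
    set s₂ : V → Bool := fun v => decide (v ∈ cl) with hs2
    set X : Set (V → Bool) := {s₁, s₂} with hX
    have hagr : ∀ w : Finset V, agrees s₁ s₂ ↑w ↔ w ⊆ cl := by
      intro w
      constructor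
      · intro h v hv
        have := h v (Finset.mem_coe.mpr hv)
        simpa [hs1, hs2] using this.symm
      · intro h v hv
        simp [hs1, hs2, h (Finset.mem_coe.mp hv)]
    have hTsat : ∀ a ∈ T, depAtom X (↑a.1) (↑a.2) := by
      intro a ha s hs s' hs' hag
      rcases hs with rfl | rfl <;> rcases hs' with rfl | rfl
      · intro v hv; rfl
      · exact (hagr a.2).mpr (hclosed a ha ((hagr a.1).mp hag))
      · intro v hv
        exact ((hagr a.2).mpr (hclosed a ha ((hagr a.1).mp
          (fun w hw => (hag w hw).symm))) v hv).symm
      · intro v hv; rfl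
    have hdep := hsem Bool X hTsat s₁ (by simp [hX]) s₂ (by simp [hX])
      ((hagr y).mpr hycl)
    have hx : x ⊆ cl := (hagr x).mp hdep
    exact ArmDeriv.of_singletons x fun v hv => (hmemcl v).mp (hx hv)
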